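/- arXiv:1907.05781 — 2 statements merged into one kernel-verified Lean document; each statement's English description precedes it below -/
import Mathlib

section
/- Monotonicity of partial covariance weights. If K = Σ⁻¹ is adapted to G = (V,E), then for any path π in G with P = V(π) and any subset A with P ⊆ A ⊆ V, it holds that |ω(π, Σ_{PP·P̄})| ≤ |ω(π, Σ_{AA·Ā})| ≤ |ω(π, Σ)|; in particular ω(π,Σ) = ω(π, Σ_{PP·P̄}) × IF_P. -/
open Matrix BigOperators Finset

variable {V : Type*} [Fintype V] [DecidableEq V]

/-- Submatrix of `M` with rows indexed by `A` and columns indexed by `B`. -/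
noncomputable def subm (M : Matrix V V ℝ) (A B : Finset V) : Matrix ↥A ↥B ℝ :=
  Matrix.of fun i j => M i.1 j.1

/-- Partial covariance matrix `Σ_{AA·B}` of `A` given a disjoint set `B`. -/
noncomputable def pcovOn (M : Matrix V V ℝ) (A B : Finset V) : Matrix ↥A ↥A ℝ :=
  subm M A A - subm M A B * (subm M B B)⁻¹ * subm M B A

/-- Partial covariance matrix `Σ_{AA·Ā}` given the complement of `A`. -/
noncomputable def pcov (M : Matrix V V ℝ) (A : Finset V) : Matrix ↥A ↥A ℝ :=
  pcovOn M A Aᶜ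

/-- Inflation factor of `A` on `B`. -/
noncomputable def inflF (M : Matrix V V ℝ) (A B : Finset V) : ℝ :=
  ((subm M A A).det * (subm M B B).det) / (subm M (A ∪ B) (A ∪ B)).det

/-- The path weight `ω(π, Γ)` of a walk `p`, computed from `Θ = Γ⁻¹`. -/
noncomputable def pathWeight (Γ : Matrix V V ℝ) {G : SimpleGraph V} {x y : V}
    (p : G.Walk x y) : ℝ :=
  (-1 : ℝ) ^ (p.support.toFinset.card + 1) *
    ((subm Γ⁻¹ p.support.toFinsetᶜ p.support.toFinsetᶜ).det / Γ⁻¹.det) *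
    (p.darts.map fun d => Γ⁻¹ d.toProd.1 d.toProd.2).prod

/-- The partial covariance weight `ω(π, Σ_{AA·Ā})` of a walk `p` with vertices in `A`,
expressed via `K = Σ⁻¹`: `(−1)^{|P|+1} (det K_{A∖P,A∖P}/det K_AA) ∏ κ_uv`. -/
noncomputable def partialPathWeight (S : Matrix V V ℝ) (A : Finset V) {G : SimpleGraph V}
    {x y : V} (p : G.Walk x y) : ℝ :=
  (-1 : ℝ) ^ (p.support.toFinset.card + 1) *
    ((subm S⁻¹ (A \ p.support.toFinset) (A \ p.support.toFinset)).det /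
      (subm S⁻¹ A A).det) *
    (p.darts.map fun d => S⁻¹ d.toProd.1 d.toProd.2).prod

/-- `K` is adapted to `G` when nonzero off-diagonal entries correspond to edges. -/
def Adapted (K : Matrix V V ℝ) (G : SimpleGraph V) : Prop :=
  ∀ u v : V, u ≠ v → K u v ≠ 0 → G.Adj u v

/-- Correlation-type scaling of a positive definite matrix. -/
noncomputable def corrScale {ι : Type*} (M : Matrix ι ι ℝ) : Matrix ι ι ℝ :=
  Matrix.of fun i j => M i j / (Real.sqrt (M i i) * Real.sqrt (M j j))

/-- The inflated correlation matrix `Φ^V = diag(K)^{1/2} Σ diag(K)^{1/2}`. -/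
noncomputable def inflCorr (S : Matrix V V ℝ) : Matrix V V ℝ :=
  Matrix.of fun u v => Real.sqrt (S⁻¹ u u) * S u v * Real.sqrt (S⁻¹ v v)

/-- The weight `ω(π, M)` of a walk `p` whose vertices lie in `P`, computed in the
induced subgraph from a matrix `M` indexed by `P`; here `V(π) = P`, so the determinant
factor (over the empty set) is `1`. -/
noncomputable def subPathWeight {P : Finset V} (M : Matrix ↥P ↥P ℝ) {G : SimpleGraph V}
    {x y : V} (p : G.Walk x y) (hp : ∀ v ∈ p.support, v ∈ P) : ℝ :=
  (-1 : ℝ) ^ (p.support.toFinset.card + 1) * (1 / M⁻¹.det) *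
    (p.darts.attach.map fun d =>
      M⁻¹ ⟨d.1.toProd.1, hp _ (SimpleGraph.Walk.dart_fst_mem_support_of_mem_darts p d.2)⟩
          ⟨d.1.toProd.2, hp _ (SimpleGraph.Walk.dart_snd_mem_support_of_mem_darts p d.2)⟩).prod

/-- Product of partial correlations `ρ_{uv·V∖{u,v}} = −κ_uv/(√κ_uu √κ_vv)`
over the edges of a walk. -/
noncomputable def prodPartialCorr (S : Matrix V V ℝ) {G : SimpleGraph V} {x y : V}
    (p : G.Walk x y) : ℝ :=
  (p.darts.map fun d => -(corrScale S⁻¹ d.toProd.1 d.toProd.2)).prod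

/-- A walk is chordless if every edge of `G` joining two of its vertices is an edge of
the walk. -/
def Chordless {G : SimpleGraph V} {x y : V} (p : G.Walk x y) : Prop :=
  ∀ u v : V, u ∈ p.support → v ∈ p.support → G.Adj u v → s(u, v) ∈ p.edges

/-- The quantity `φ(π, R) = det((I−R)_{P̄P̄}) ∏ ρ_{uv·V∖{u,v}}`. -/
noncomputable def phiWeight (S : Matrix V V ℝ) {G : SimpleGraph V} {x y : V}
    (p : G.Walk x y) : ℝ :=
  (subm (corrScale S⁻¹) p.support.toFinsetᶜ p.support.toFinsetᶜ).det * prodPartialCorr S p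

section AuxWM

variable {ι : Type*} [Fintype ι] [DecidableEq ι]

/-- Equiv between a sum of disjoint finsets and their union. -/
def unionEquivWM (X Y : Finset ι) (h : Disjoint X Y) : (↥X ⊕ ↥Y) ≃ ↥(X ∪ Y) where
  toFun z := Sum.elim (fun i => ⟨i.1, Finset.mem_union_left _ i.2⟩)
                      (fun j => ⟨j.1, Finset.mem_union_right _ j.2⟩) z
  invFun v := if hv : v.1 ∈ X then Sum.inl ⟨v.1, hv⟩ else
    Sum.inr ⟨v.1, (Finset.mem_union.1 v.2).resolve_left hv⟩
  left_inv z := by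
    rcases z with i | j
    · simp [i.2]
    · have hj : (j : ι) ∉ X := fun hx => (Finset.disjoint_left.1 h) hx j.2
      simp [hj]
  right_inv v := by
    by_cases hv : v.1 ∈ X <;> simp [hv]

lemma subm_union_submatrixWM (M : Matrix ι ι ℝ) (X Y : Finset ι) (h : Disjoint X Y) :
    (subm M (X ∪ Y) (X ∪ Y)).submatrix (unionEquivWM X Y h) (unionEquivWM X Y h) =
      Matrix.fromBlocks (subm M X X) (subm M X Y) (subm M Y X) (subm M Y Y) := by
  ext i j
  rcases i with i | i <;> rcases j with j | j <;> rfl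

/-- Equiv between `↥B ⊕ ↥Bᶜ` and the whole type. -/
def complEquivWM (B : Finset ι) : (↥B ⊕ ↥Bᶜ) ≃ ι :=
  (unionEquivWM B Bᶜ disjoint_compl_right).trans
    { toFun := fun v => v.1
      invFun := fun x => ⟨x, by by_cases h : x ∈ B <;> simp [h]⟩
      left_inv := fun v => Subtype.ext rfl
      right_inv := fun x => rfl }

lemma submatrix_complEquivWM (M : Matrix ι ι ℝ) (B : Finset ι) :
    M.submatrix (complEquivWM B) (complEquivWM B) =
      Matrix.fromBlocks (subm M B B) (subm M B Bᶜ) (subm M Bᶜ B) (subm M Bᶜ Bᶜ) := by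
  ext i j
  rcases i with i | i <;> rcases j with j | j <;> rfl

lemma posDef_subm {M : Matrix ι ι ℝ} (hM : M.PosDef) (B : Finset ι) :
    (subm M B B).PosDef := by
  refine Matrix.posDef_iff_dotProduct_mulVec.2 ⟨?_, ?_⟩
  · ext i j
    simpa [Matrix.conjTranspose_apply, subm] using congrFun (congrFun hM.1 i.1) j.1
  · intro x hx
    set y : ι → ℝ := fun v => if h : v ∈ B then x ⟨v, h⟩ else 0 with hy
    have hy0 : y ≠ 0 := by
      intro h0
      apply hx
      funext i
      have := congrFun h0 i.1
      simpa [hy, i.2] using this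
    have hxy' : ∀ j : ↥B, y j.1 = x j := fun j => by simp [hy, j.2]
    have inner : ∀ v : ι, (M *ᵥ y) v = ∑ j : ↥B, M v j.1 * x j := by
      intro v
      show (∑ w : ι, M v w * y w) = _
      rw [← Finset.sum_subset (Finset.subset_univ B)
          (fun w _ hw => by simp [hy, hw]),
        Finset.sum_subtype B (fun w => Iff.rfl) (fun w => M v w * y w)]
      exact Finset.sum_congr rfl (fun j _ => by rw [hxy' j])
    have key : star x ⬝ᵥ (subm M B B) *ᵥ x = star y ⬝ᵥ M *ᵥ y := by
      have hR : star y ⬝ᵥ M *ᵥ y = ∑ v : ι, star (y v) * (M *ᵥ y) v := rfl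
      rw [hR, ← Finset.sum_subset (Finset.subset_univ B)
          (fun w _ hw => by simp [hy, hw]),
        Finset.sum_subtype B (fun w => Iff.rfl)
          (fun v => star (y v) * (M *ᵥ y) v)]
      show (∑ i : ↥B, star (x i) * (∑ j : ↥B, M i.1 j.1 * x j)) = _
      exact Finset.sum_congr rfl (fun i _ => by rw [inner, hxy' i])
    rw [key]
    exact hM.dotProduct_mulVec_pos hy0

lemma posDef_submatrix_equivWM {m : Type*} [Fintype m] {M : Matrix ι ι ℝ}
    (hM : M.PosDef) (e : m ≃ ι) : (M.submatrix e e).PosDef := by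
  refine Matrix.posDef_iff_dotProduct_mulVec.2 ⟨?_, ?_⟩
  · exact (Matrix.isHermitian_submatrix_equiv e).2 hM.1
  · intro x hx
    have hx' : (x ∘ e.symm) ≠ 0 := by
      intro h0
      apply hx
      funext i
      simpa using congrFun h0 (e i)
    have hq := hM.dotProduct_mulVec_pos hx'
    convert hq using 1
    rw [Matrix.submatrix_mulVec_equiv]
    show (∑ i : m, star (x i) * (M *ᵥ (x ∘ e.symm)) (e i)) =
      ∑ j : ι, star ((x ∘ e.symm) j) * (M *ᵥ (x ∘ e.symm)) j
    exact Fintype.sum_equiv e _ _ (fun i => by simp)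

lemma one_le_det_one_addWM {C : Matrix ι ι ℝ} (hC : C.PosSemidef) :
    1 ≤ (1 + C).det := by
  have hH : (1 + C).IsHermitian := Matrix.isHermitian_one.add hC.isHermitian
  have hdet : (1 + C).det = ∏ i, hH.eigenvalues i := by
    simpa using hH.det_eq_prod_eigenvalues
  rw [hdet]
  have h1 : ∀ i, 1 ≤ hH.eigenvalues i := by
    intro i
    have hv := hH.eigenvalues_eq i
    set v : ι → ℝ := ⇑(hH.eigenvectorBasis i) with hvdef
    have hvv : star v ⬝ᵥ v = 1 := by
      have hnorm : ‖hH.eigenvectorBasis i‖ = 1 := hH.eigenvectorBasis.orthonormal.1 i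
      have hinner : (inner ℝ (hH.eigenvectorBasis i) (hH.eigenvectorBasis i) : ℝ) = 1 := by
        rw [real_inner_self_eq_norm_sq, hnorm]; norm_num
      rw [← hinner]
      simp only [PiLp.inner_apply, dotProduct, RCLike.inner_apply, starRingEnd_apply,
        star_trivial]
      rfl
    have hCv : 0 ≤ star v ⬝ᵥ C *ᵥ v := hC.dotProduct_mulVec_nonneg v
    have : hH.eigenvalues i = 1 + star v ⬝ᵥ C *ᵥ v := by
      rw [hv]
      simp only [Matrix.add_mulVec, Matrix.one_mulVec, dotProduct_add, RCLike.re_to_real]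
      rw [hvv]
    rw [this]
    linarith
  calc (1:ℝ) = ∏ _i : ι, 1 := by simp
    _ ≤ ∏ i, hH.eigenvalues i :=
      Finset.prod_le_prod (by simp) (fun i _ => h1 i)

open scoped MatrixOrder in
lemma det_le_det_addWM {A N : Matrix ι ι ℝ} (hA : A.PosDef) (hN : N.PosSemidef) :
    A.det ≤ (A + N).det := by
  set R := CFC.sqrt A with hRdef
  have hR : R.PosSemidef := (CFC.sqrt_nonneg A).posSemidef
  have hRR : R * R = A := CFC.sqrt_mul_sqrt_self A hA.posSemidef.nonneg
  have hdetA : R.det * R.det = A.det := by rw [← Matrix.det_mul, hRR]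
  have hdA : 0 < A.det := hA.det_pos
  have hdR : IsUnit R.det := by
    apply isUnit_iff_ne_zero.2
    intro h0
    rw [h0, mul_zero] at hdetA
    exact hdA.ne' hdetA.symm
  have hRinvH : R⁻¹.IsHermitian := hR.isHermitian.inv
  set C := R⁻¹ * N * R⁻¹ with hCdef
  have hCpsd : C.PosSemidef := by
    have := hN.conjTranspose_mul_mul_same R⁻¹
    rwa [hRinvH.eq] at this
  have hfact : A + N = R * (1 + C) * R := by
    have h1 : R * (1 + C) * R = R * R + R * C * R := by noncomm_ring
    rw [h1, hRR, hCdef]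
    congr 1
    calc N = (R * R⁻¹) * N * (R⁻¹ * R) := by
          rw [Matrix.mul_nonsing_inv _ hdR, Matrix.nonsing_inv_mul _ hdR,
            Matrix.one_mul, Matrix.mul_one]
      _ = R * (R⁻¹ * N * R⁻¹) * R := by noncomm_ring
  have hone := one_le_det_one_addWM hCpsd
  calc A.det = A.det * 1 := (mul_one _).symm
    _ ≤ A.det * (1 + C).det := by
        apply mul_le_mul_of_nonneg_left hone hdA.le
    _ = (A + N).det := by
        rw [hfact, Matrix.det_mul, Matrix.det_mul, ← hdetA]; ring

lemma posDef_of_psd_isUnit_detWM {M : Matrix ι ι ℝ} (hM : M.PosSemidef)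
    (hd : IsUnit M.det) : M.PosDef := by
  refine Matrix.PosDef.of_dotProduct_mulVec_pos hM.1 (fun x hx => ?_)
  rcases lt_or_eq_of_le (hM.dotProduct_mulVec_nonneg x) with h | h
  · exact h
  · exfalso
    apply hx
    have h0 : M *ᵥ x = 0 := (hM.dotProduct_mulVec_zero_iff x).1 h.symm
    have h1 : M⁻¹ *ᵥ (M *ᵥ x) = M⁻¹ *ᵥ 0 := by rw [h0]
    rwa [Matrix.mulVec_mulVec, Matrix.nonsing_inv_mul _ hd, Matrix.one_mulVec,
      Matrix.mulVec_zero] at h1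

lemma fischerWM {M : Matrix ι ι ℝ} (hM : M.PosDef) {X Y : Finset ι} (h : Disjoint X Y) :
    (subm M (X ∪ Y) (X ∪ Y)).det ≤ (subm M X X).det * (subm M Y Y).det := by
  set e := unionEquivWM X Y h
  have hF : (Matrix.fromBlocks (subm M X X) (subm M X Y)
      (subm M Y X) (subm M Y Y)).PosDef := by
    rw [← subm_union_submatrixWM M X Y h]
    exact posDef_submatrix_equivWM (posDef_subm hM _) e
  have hdetU : (subm M (X ∪ Y) (X ∪ Y)).det =
      (Matrix.fromBlocks (subm M X X) (subm M X Y) (subm M Y X) (subm M Y Y)).det := by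
    rw [← subm_union_submatrixWM M X Y h, Matrix.det_submatrix_equiv_self]
  set A := subm M X X with hAdef
  set B := subm M X Y with hBdef
  set D := subm M Y Y with hDdef
  have hC : subm M Y X = Bᴴ := by
    ext i j
    show M i.1 j.1 = star (M j.1 i.1)
    simpa [Matrix.conjTranspose_apply] using (congrFun (congrFun hM.1.symm i.1) j.1)
  have hApd : A.PosDef := posDef_subm hM X
  have hDpd : D.PosDef := posDef_subm hM Y
  haveI : Invertible D := D.invertibleOfIsUnitDet (isUnit_iff_ne_zero.2 hDpd.det_pos.ne')
  have hdetF : (Matrix.fromBlocks A B (subm M Y X) D).det =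
      D.det * (A - B * D⁻¹ * Bᴴ).det := by
    rw [Matrix.det_fromBlocks₂₂, Matrix.invOf_eq_nonsing_inv, hC]
  have hSchurPsd : (A - B * D⁻¹ * Bᴴ).PosSemidef := by
    have hF' : (Matrix.fromBlocks A B Bᴴ D).PosSemidef := by
      rw [← hC]; exact hF.posSemidef
    exact (Matrix.PosDef.fromBlocks₂₂ A B hDpd).1 hF'
  have hSchurDet : 0 < (A - B * D⁻¹ * Bᴴ).det := by
    have h1 : 0 < D.det * (A - B * D⁻¹ * Bᴴ).det := by
      rw [← hdetF]
      exact hF.det_pos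
    have h2 := hDpd.det_pos
    by_contra hcon
    push_neg at hcon
    nlinarith
  have hSchurPd : (A - B * D⁻¹ * Bᴴ).PosDef :=
    posDef_of_psd_isUnit_detWM hSchurPsd (isUnit_iff_ne_zero.2 hSchurDet.ne')
  have hGap : (B * D⁻¹ * Bᴴ).PosSemidef :=
    hDpd.inv.posSemidef.mul_mul_conjTranspose_same B
  have hle : (A - B * D⁻¹ * Bᴴ).det ≤ A.det := by
    have h3 := det_le_det_addWM hSchurPd hGap
    rwa [sub_add_cancel] at h3
  rw [hdetU]
  calc (Matrix.fromBlocks A B (subm M Y X) D).det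
      = D.det * (A - B * D⁻¹ * Bᴴ).det := hdetF
    _ ≤ D.det * A.det := mul_le_mul_of_nonneg_left hle hDpd.det_pos.le
    _ = A.det * D.det := mul_comm _ _

/-- Jacobi's identity for positive definite matrices. -/
lemma jacobiWM {K : Matrix ι ι ℝ} (hK : K.PosDef) (B : Finset ι) :
    (subm K⁻¹ B B).det * K.det = (subm K Bᶜ Bᶜ).det := by
  set e := complEquivWM B
  have hdK : IsUnit K.det := isUnit_iff_ne_zero.2 hK.det_pos.ne'
  set A₁ := subm K B B
  set B₁ := subm K B Bᶜ
  set C₁ := subm K Bᶜ B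
  set D₁ := subm K Bᶜ Bᶜ
  set A₂ := subm K⁻¹ B B
  set B₂ := subm K⁻¹ B Bᶜ
  set C₂ := subm K⁻¹ Bᶜ B
  set D₂ := subm K⁻¹ Bᶜ Bᶜ
  have hmul : Matrix.fromBlocks A₁ B₁ C₁ D₁ * Matrix.fromBlocks A₂ B₂ C₂ D₂ = 1 := by
    rw [← submatrix_complEquivWM K B, ← submatrix_complEquivWM K⁻¹ B,
      Matrix.submatrix_mul_equiv, Matrix.mul_nonsing_inv _ hdK,
      Matrix.submatrix_one_equiv]
  rw [Matrix.fromBlocks_multiply] at hmul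
  have h11 : A₁ * A₂ + B₁ * C₂ = 1 := by
    have h := congrArg Matrix.toBlocks₁₁ hmul
    rwa [Matrix.toBlocks_fromBlocks₁₁, ← Matrix.fromBlocks_one,
      Matrix.toBlocks_fromBlocks₁₁] at h
  have h21 : C₁ * A₂ + D₁ * C₂ = 0 := by
    have h := congrArg Matrix.toBlocks₂₁ hmul
    rwa [Matrix.toBlocks_fromBlocks₂₁, ← Matrix.fromBlocks_one,
      Matrix.toBlocks_fromBlocks₂₁] at h
  have hD₁pd : D₁.PosDef := posDef_subm hK Bᶜ
  have hD₁d : IsUnit D₁.det := isUnit_iff_ne_zero.2 hD₁pd.det_pos.ne'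
  haveI : Invertible D₁ := D₁.invertibleOfIsUnitDet hD₁d
  have hC₂ : C₂ = -(D₁⁻¹ * (C₁ * A₂)) := by
    have h := eq_neg_of_add_eq_zero_right h21
    have h' : D₁⁻¹ * (D₁ * C₂) = D₁⁻¹ * (-(C₁ * A₂)) := by rw [h]
    rwa [Matrix.nonsing_inv_mul_cancel_left _ _ hD₁d, Matrix.mul_neg] at h'
  have hSchur : (A₁ - B₁ * D₁⁻¹ * C₁) * A₂ = 1 := by
    have e1 : A₁ * A₂ = 1 - B₁ * C₂ := eq_sub_of_add_eq h11
    rw [Matrix.sub_mul, e1, hC₂]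
    simp only [Matrix.mul_neg, sub_neg_eq_add, Matrix.mul_assoc]
    abel
  have hSchurDet : (A₁ - B₁ * D₁⁻¹ * C₁).det * A₂.det = 1 := by
    rw [← Matrix.det_mul, hSchur, Matrix.det_one]
  have hdetK : K.det = D₁.det * (A₁ - B₁ * D₁⁻¹ * C₁).det := by
    rw [← Matrix.det_submatrix_equiv_self e, submatrix_complEquivWM K B,
      Matrix.det_fromBlocks₂₂, Matrix.invOf_eq_nonsing_inv]
  rw [hdetK]
  linear_combination D₁.det * hSchurDet

lemma abs_mul_mul_le_WM {c pr X Y : ℝ} (hc : |c| = 1) (hX : 0 < X) (hXY : X ≤ Y) :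
    |c * X * pr| ≤ |c * Y * pr| := by
  rw [abs_mul, abs_mul, abs_mul, abs_mul, hc, one_mul, one_mul,
    abs_of_pos hX, abs_of_pos (lt_of_lt_of_le hX hXY)]
  exact mul_le_mul_of_nonneg_right hXY (abs_nonneg _)

lemma final_algebra_WM (c pr a b d : ℝ) (hb : b ≠ 0) (hd : d ≠ 0) :
    c * (a / d) * pr = c * (1 / b) * pr * (a / d * (b / d) / d⁻¹) := by
  field_simp

end AuxWM

set_option maxHeartbeats 1600000

/-- monotonicity of partial covariance weights:
`|ω(π,Σ_{PP·P̄})| ≤ |ω(π,Σ_{AA·Ā})| ≤ |ω(π,Σ)|` for `P ⊆ A ⊆ V`, and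
`ω(π,Σ) = ω(π,Σ_{PP·P̄}) × IF_P`. -/
theorem weight_monotonicity {V : Type*} [Fintype V] [DecidableEq V]
    (S : Matrix V V ℝ) (hS : S.PosDef) (G : SimpleGraph V) [DecidableRel G.Adj]
    (hadapt : Adapted S⁻¹ G) {x y : V} (hxy : x ≠ y) (p : G.Walk x y) (hp : p.IsPath)
    (A : Finset V) (hPA : p.support.toFinset ⊆ A) :
    |partialPathWeight S p.support.toFinset p| ≤ |partialPathWeight S A p| ∧
    |partialPathWeight S A p| ≤ |pathWeight S p| ∧
    pathWeight S p =
      partialPathWeight S p.support.toFinset p *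
        inflF S p.support.toFinset p.support.toFinsetᶜ := by
  classical
  set P := p.support.toFinset with hPdef
  have hSdet : IsUnit S.det := isUnit_iff_ne_zero.2 hS.det_pos.ne'
  have hK : (S⁻¹).PosDef := hS.inv
  have hKK : S⁻¹⁻¹ = S := Matrix.nonsing_inv_nonsing_inv S hSdet
  have hdP : 0 < (subm S⁻¹ P P).det := (posDef_subm hK P).det_pos
  have hdA : 0 < (subm S⁻¹ A A).det := (posDef_subm hK A).det_pos
  have hdAP : 0 < (subm S⁻¹ (A \ P) (A \ P)).det := (posDef_subm hK _).det_pos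
  have hdPc : 0 < (subm S⁻¹ Pᶜ Pᶜ).det := (posDef_subm hK _).det_pos
  have hdV : 0 < (S⁻¹).det := hK.det_pos
  have jac : ∀ B : Finset V, (subm S B B).det * (S⁻¹).det = (subm S⁻¹ Bᶜ Bᶜ).det := by
    intro B
    have h := jacobiWM hK B
    rwa [hKK] at h
  have j1 : (subm S P P).det * (S⁻¹).det = (subm S⁻¹ Pᶜ Pᶜ).det := jac P
  have j2 : (subm S Pᶜ Pᶜ).det * (S⁻¹).det = (subm S⁻¹ P P).det := by
    have h := jac Pᶜ; rwa [compl_compl] at h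
  have j3 : (subm S Aᶜ Aᶜ).det * (S⁻¹).det = (subm S⁻¹ A A).det := by
    have h := jac Aᶜ; rwa [compl_compl] at h
  have hAcP : (Aᶜ ∪ P)ᶜ = A \ P := by
    ext v
    simp only [Finset.mem_compl, Finset.mem_union, Finset.mem_sdiff]
    tauto
  have j4 : (subm S (Aᶜ ∪ P) (Aᶜ ∪ P)).det * (S⁻¹).det
      = (subm S⁻¹ (A \ P) (A \ P)).det := by
    have h := jac (Aᶜ ∪ P); rwa [hAcP] at h
  have f1 : (subm S⁻¹ A A).det ≤ (subm S⁻¹ (A \ P) (A \ P)).det * (subm S⁻¹ P P).det := by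
    have h := fischerWM hK (Finset.sdiff_disjoint : Disjoint (A \ P) P)
    rwa [Finset.sdiff_union_of_subset hPA] at h
  have hdisj : Disjoint Aᶜ P := by
    rw [Finset.disjoint_left]
    intro a ha hpa
    exact (Finset.mem_compl.1 ha) (hPA hpa)
  have f2 : (subm S (Aᶜ ∪ P) (Aᶜ ∪ P)).det ≤ (subm S Aᶜ Aᶜ).det * (subm S P P).det :=
    fischerWM hS hdisj
  have hone : (subm S⁻¹ (P \ P) (P \ P)).det = 1 := by
    rw [Finset.sdiff_self]
    haveI : IsEmpty (↥(∅ : Finset V)) := Finset.isEmpty_coe_sort.2 rfl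
    exact Matrix.det_isEmpty
  have hc : |(-1 : ℝ) ^ (P.card + 1)| = 1 := by
    rw [abs_pow, abs_neg, abs_one, one_pow]
  have key1 : 1 / (subm S⁻¹ P P).det
      ≤ (subm S⁻¹ (A \ P) (A \ P)).det / (subm S⁻¹ A A).det := by
    rw [div_le_div_iff₀ hdP hdA, one_mul]
    exact f1
  have key2 : (subm S⁻¹ (A \ P) (A \ P)).det / (subm S⁻¹ A A).det
      ≤ (subm S⁻¹ Pᶜ Pᶜ).det / (S⁻¹).det := by
    rw [div_le_div_iff₀ hdA hdV]
    have h5 : (subm S (Aᶜ ∪ P) (Aᶜ ∪ P)).det * ((S⁻¹).det * (S⁻¹).det)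
        ≤ (subm S Aᶜ Aᶜ).det * (subm S P P).det * ((S⁻¹).det * (S⁻¹).det) :=
      mul_le_mul_of_nonneg_right f2 (by positivity)
    calc (subm S⁻¹ (A \ P) (A \ P)).det * (S⁻¹).det
        = (subm S (Aᶜ ∪ P) (Aᶜ ∪ P)).det * ((S⁻¹).det * (S⁻¹).det) := by
          rw [← j4]; ring
      _ ≤ (subm S Aᶜ Aᶜ).det * (subm S P P).det * ((S⁻¹).det * (S⁻¹).det) := h5
      _ = (subm S⁻¹ Pᶜ Pᶜ).det * (subm S⁻¹ A A).det := by
          rw [← j1, ← j3]; ring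
  have hsP : (subm S P P).det = (subm S⁻¹ Pᶜ Pᶜ).det / (S⁻¹).det :=
    (eq_div_iff hdV.ne').2 j1
  have hsPc : (subm S Pᶜ Pᶜ).det = (subm S⁻¹ P P).det / (S⁻¹).det :=
    (eq_div_iff hdV.ne').2 j2
  have hdetS : S.det = (S⁻¹).det⁻¹ := by
    rw [Matrix.det_nonsing_inv, Ring.inverse_eq_inv, inv_inv]
  have huniv : (subm S (Finset.univ : Finset V) (Finset.univ : Finset V)).det = S.det := by
    have hrw : subm S (Finset.univ : Finset V) (Finset.univ : Finset V)
        = S.submatrix (Equiv.subtypeUnivEquiv (fun x => Finset.mem_univ x))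
          (Equiv.subtypeUnivEquiv (fun x => Finset.mem_univ x)) := rfl
    rw [hrw, Matrix.det_submatrix_equiv_self]
  refine ⟨?_, ?_, ?_⟩
  · simp only [partialPathWeight]
    rw [hone]
    exact abs_mul_mul_le_WM hc (div_pos one_pos hdP) key1
  · simp only [partialPathWeight, pathWeight]
    exact abs_mul_mul_le_WM hc (div_pos hdAP hdA) key2
  · simp only [partialPathWeight, pathWeight, inflF]
    have hPPc : P ∪ Pᶜ = (Finset.univ : Finset V) := by
      ext v
      simp only [Finset.mem_union, Finset.mem_compl, Finset.mem_univ, iff_true]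
      tauto
    rw [hone, hPPc, huniv, hsP, hsPc, hdetS]
    exact final_algebra_WM _ _ _ _ _ hdP.ne' hdV.ne'
end

section
/- Covariance weight of a chordless path. Let K = Σ⁻¹ be adapted to G = (V,E) and let π be a path between x and y in G with vertex set P = V(π). If π is chordless (no edge of G joins two nonadjacent vertices of π, equivalently π is the unique path between x and y in the induced subgraph G_P), then ω(π,Σ) = σ_{xy·P̄} × IF_P. -/
open Matrix BigOperators Finset

variable {V : Type*} [Fintype V] [DecidableEq V]

/-! ### Auxiliary lemmas -/

noncomputable def finsetComplEquiv (P : Finset V) : ↥P ⊕ ↥(Pᶜ : Finset V) ≃ V :=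
  (Equiv.sumCongr (Equiv.refl _) (Equiv.subtypeEquivRight (fun v => Finset.mem_compl))).trans
    (Equiv.sumCompl (· ∈ P))

lemma submatrix_finsetCompl (M : Matrix V V ℝ) (P : Finset V) :
    M.submatrix (finsetComplEquiv P) (finsetComplEquiv P) =
      fromBlocks (subm M P P) (subm M P Pᶜ) (subm M Pᶜ P) (subm M Pᶜ Pᶜ) := by
  ext i j
  cases i <;> cases j <;> rfl

lemma subm_posDef {S : Matrix V V ℝ} (hS : S.PosDef) (A : Finset V) : (subm S A A).PosDef := by
  have e1 : ∀ f : V → ℝ, (∀ w ∉ A, f w = 0) → ∑ w : V, f w = ∑ w ∈ A.attach, f w.1 := by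
    intro f hf
    rw [Finset.sum_attach A (fun w => f w)]
    exact (Finset.sum_subset A.subset_univ (fun w _ hw => hf w hw)).symm
  refine Matrix.PosDef.of_dotProduct_mulVec_pos ?_ ?_
  · ext i j
    simpa [subm, Matrix.conjTranspose_apply] using congrFun (congrFun hS.1 i.1) j.1
  · intro x hx
    set y : V → ℝ := fun v => if h : v ∈ A then x ⟨v, h⟩ else 0 with hy
    have hy0 : y ≠ 0 := by
      intro h
      apply hx
      funext i
      have := congrFun h i.1
      simpa [hy, i.2] using this
    have hpos := hS.dotProduct_mulVec_pos hy0
    have key : ∀ v : V, (S *ᵥ y) v = ∑ j ∈ A.attach, S v j.1 * x j := by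
      intro v
      show ∑ w : V, S v w * y w = _
      rw [e1 _ (fun w hw => by simp [hy, hw])]
      refine Finset.sum_congr rfl fun w _ => ?_
      simp [hy, w.2]
    have key2 : star y ⬝ᵥ (S *ᵥ y) = star x ⬝ᵥ (subm S A A *ᵥ x) := by
      show ∑ v : V, star (y v) * (S *ᵥ y) v = _
      rw [e1 _ (fun w hw => by simp [hy, hw])]
      show _ = ∑ i : ↥A, star (x i) * (subm S A A *ᵥ x) i
      rw [Finset.univ_eq_attach]
      refine Finset.sum_congr rfl fun w _ => ?_
      have hyw : y w.1 = x w := by simp [hy, w.2]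
      rw [key, hyw]
      congr 1
    rw [← key2]
    exact hpos

lemma subm_univ_det (M : Matrix V V ℝ) :
    (subm M (univ : Finset V) univ).det = M.det := by
  rw [show subm M univ univ
      = M.submatrix (Equiv.subtypeUnivEquiv (fun v => Finset.mem_univ v))
        (Equiv.subtypeUnivEquiv (fun v => Finset.mem_univ v)) from rfl]
  exact Matrix.det_submatrix_equiv_self _ M

lemma subm_det_congr (M : Matrix V V ℝ) {A B : Finset V} (h : A = B) :
    (subm M A A).det = (subm M B B).det := by
  subst h
  rfl

lemma schur_package {S : Matrix V V ℝ} (hS : S.PosDef) (P : Finset V) :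
    subm S⁻¹ P P = (pcovOn S P Pᶜ)⁻¹ ∧
      (subm S⁻¹ P P).det = (subm S Pᶜ Pᶜ).det / S.det := by
  classical
  have hA := subm_posDef hS P
  have hD := subm_posDef hS Pᶜ
  set A := subm S P P with hAdef
  set B := subm S P Pᶜ
  set C := subm S Pᶜ P
  set D := subm S Pᶜ Pᶜ
  haveI : Invertible A := A.invertibleOfIsUnitDet (isUnit_iff_ne_zero.2 hA.det_pos.ne')
  haveI : Invertible D := D.invertibleOfIsUnitDet (isUnit_iff_ne_zero.2 hD.det_pos.ne')
  haveI : Invertible S := S.invertibleOfIsUnitDet (isUnit_iff_ne_zero.2 hS.det_pos.ne')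
  set e := finsetComplEquiv P
  have hN : S.submatrix e e = fromBlocks A B C D := submatrix_finsetCompl S P
  haveI : Invertible (S.submatrix ⇑e ⇑e) := Matrix.submatrixEquivInvertible S e e
  haveI hFB : Invertible (fromBlocks A B C D) := hN ▸ ‹Invertible (S.submatrix ⇑e ⇑e)›
  haveI : Invertible (A - B * ⅟D * C) := Matrix.invertibleOfFromBlocks₂₂Invertible A B C D
  have hinv : S⁻¹.submatrix e e = (fromBlocks A B C D)⁻¹ := by
    rw [← hN, Matrix.inv_submatrix_equiv]
  have hblocks := submatrix_finsetCompl S⁻¹ P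
  have h1 : subm S⁻¹ P P = ⅟(A - B*⅟D*C) := by
    have h2 : (fromBlocks A B C D)⁻¹ = ⅟(fromBlocks A B C D) := (invOf_eq_nonsing_inv _).symm
    have h3 := hblocks.symm.trans (hinv.trans (h2.trans (invOf_fromBlocks₂₂_eq A B C D)))
    have := congrArg Matrix.toBlocks₁₁ h3
    simpa [Matrix.toBlocks_fromBlocks₁₁] using this
  have hSchur : A - B * ⅟D * C = pcovOn S P Pᶜ := by
    rw [invOf_eq_nonsing_inv]
    rfl
  have hdetN : S.det = D.det * (A - B * ⅟D * C).det := by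
    rw [← Matrix.det_submatrix_equiv_self e S, hN, Matrix.det_fromBlocks₂₂]
  have hSne : S.det ≠ 0 := hS.det_pos.ne'
  have hDne : D.det ≠ 0 := hD.det_pos.ne'
  have hschurdet : (A - B * ⅟D * C).det = S.det / D.det := by
    field_simp [hdetN]
    rw [hdetN]
    ring
  have hschurne : (A - B * ⅟D * C).det ≠ 0 := by
    rw [hschurdet]
    exact div_ne_zero hSne hDne
  constructor
  · rw [h1, invOf_eq_nonsing_inv, hSchur]
  · rw [h1, invOf_eq_nonsing_inv, Matrix.det_nonsing_inv, Ring.inverse_eq_inv', hschurdet]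
    rw [inv_div]

lemma det_updateRow_tridiag {n : ℕ} (M : Matrix (Fin (n+1)) (Fin (n+1)) ℝ)
    (h : ∀ i j : Fin (n+1), (i : ℕ) + 1 < (j : ℕ) → M i j = 0) :
    (M.updateRow (Fin.last n) (Pi.single 0 1)).det
      = (-1 : ℝ)^n * ∏ i : Fin n, M i.castSucc i.succ := by
  set B := M.updateRow (Fin.last n) (Pi.single 0 1) with hB
  set σ : Equiv.Perm (Fin (n+1)) := (finRotate (n+1)).symm with hσ
  have hσ0 : σ 0 = Fin.last n := by
    rw [hσ, Equiv.symm_apply_eq, finRotate_succ_apply]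
    simp
  have hσs : ∀ i : Fin n, σ i.succ = i.castSucc := by
    intro i
    rw [hσ, Equiv.symm_apply_eq, finRotate_succ_apply, Fin.coeSucc_eq_succ]
  have hperm : (B.submatrix σ id).det = Equiv.Perm.sign σ * B.det := Matrix.det_permute σ B
  have hsign : (Equiv.Perm.sign σ : ℝ) = (-1)^n := by
    rw [hσ, Equiv.Perm.sign_symm, sign_finRotate]
    push_cast
    ring
  have htri : (B.submatrix σ id).BlockTriangular OrderDual.toDual := by
    intro i j hij
    simp only [OrderDual.toDual_lt_toDual] at hij
    induction i using Fin.cases with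
    | zero =>
        have hj : j ≠ 0 := by exact fun hj => by simp [hj] at hij
        simp [hB, hσ0, Matrix.submatrix_apply, Matrix.updateRow_self, Pi.single_apply, hj]
    | succ i =>
        have hne : i.castSucc ≠ Fin.last n := (Fin.castSucc_lt_last i).ne
        have : (i : ℕ) + 1 < (j : ℕ) := by
          have := hij
          simp only [Fin.lt_def, Fin.val_succ] at this
          omega
        show B (σ i.succ) j = 0
        rw [hσs, hB, Matrix.updateRow_ne hne]
        exact h i.castSucc j (by simpa using this)
  have hdetC : (B.submatrix σ id).det = ∏ i : Fin (n+1), (B.submatrix σ id) i i :=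
    Matrix.det_of_lowerTriangular _ htri
  have hdiag : ∏ i : Fin (n+1), (B.submatrix σ id) i i
      = ∏ i : Fin n, M i.castSucc i.succ := by
    rw [Fin.prod_univ_succ]
    have h0 : (B.submatrix σ id) 0 0 = 1 := by
      simp [hB, hσ0, Matrix.submatrix_apply, Matrix.updateRow_self, Pi.single_apply]
    rw [h0, one_mul]
    refine Finset.prod_congr rfl fun i _ => ?_
    have hne : i.castSucc ≠ Fin.last n := (Fin.castSucc_lt_last i).ne
    simp [hB, Matrix.submatrix_apply, hσs, Matrix.updateRow_ne hne]
  have hs2 : (Equiv.Perm.sign σ : ℝ) * (Equiv.Perm.sign σ : ℝ) = 1 := by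
    rw [hsign, ← pow_add]
    exact Even.neg_one_pow ⟨n, rfl⟩
  have hsp : (Equiv.Perm.sign σ : ℝ) * B.det = ∏ i : Fin n, M i.castSucc i.succ :=
    hperm.symm.trans (hdetC.trans hdiag)
  have hfin : B.det = (Equiv.Perm.sign σ : ℝ) * ∏ i : Fin n, M i.castSucc i.succ := by
    calc B.det = ((Equiv.Perm.sign σ : ℝ) * (Equiv.Perm.sign σ : ℝ)) * B.det := by
          rw [hs2, one_mul]
      _ = (Equiv.Perm.sign σ : ℝ) * ((Equiv.Perm.sign σ : ℝ) * B.det) := by ring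
      _ = _ := by rw [hsp]
  rw [hfin, hsign]

section WalkLemmas

variable {G : SimpleGraph V} {x y : V}

lemma darts_getElem_fst (p : G.Walk x y) (i : ℕ) (hi : i < p.length) :
    (p.darts[i]'(by rw [SimpleGraph.Walk.length_darts]; exact hi)).toProd.1
      = p.support[i]'(by rw [SimpleGraph.Walk.length_support]; omega) := by
  have h := SimpleGraph.Walk.map_fst_darts p
  have h2 := List.getElem_of_eq h (i := i)
    (by rw [List.length_map, SimpleGraph.Walk.length_darts]; exact hi)
  rw [List.getElem_map] at h2
  rw [h2, List.getElem_dropLast]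

lemma darts_getElem_snd (p : G.Walk x y) (i : ℕ) (hi : i < p.length) :
    (p.darts[i]'(by rw [SimpleGraph.Walk.length_darts]; exact hi)).toProd.2
      = p.support[i+1]'(by rw [SimpleGraph.Walk.length_support]; omega) := by
  have h := SimpleGraph.Walk.map_snd_darts p
  have h2 := List.getElem_of_eq h (i := i)
    (by rw [List.length_map, SimpleGraph.Walk.length_darts]; exact hi)
  rw [List.getElem_map] at h2
  rw [h2, List.getElem_tail]

lemma walk_edges_pos (p : G.Walk x y) (hp : p.support.Nodup) {i j : ℕ}
    (hi : i < p.support.length) (hj : j < p.support.length)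
    (he : s(p.support[i], p.support[j]) ∈ p.edges) : j = i + 1 ∨ i = j + 1 := by
  rw [SimpleGraph.Walk.edges, List.mem_map] at he
  obtain ⟨d, hd, hde⟩ := he
  obtain ⟨k, hk, hdk⟩ := List.getElem_of_mem hd
  rw [SimpleGraph.Walk.length_darts] at hk
  have hfst := darts_getElem_fst p k hk
  have hsnd := darts_getElem_snd p k hk
  rw [hdk] at hfst hsnd
  have hed : d.edge = s(p.support[k]'(by rw [SimpleGraph.Walk.length_support]; omega),
      p.support[k+1]'(by rw [SimpleGraph.Walk.length_support]; omega)) := by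
    rw [SimpleGraph.Dart.edge, ← hfst, ← hsnd]
  have hsl : p.support.length = p.length + 1 := SimpleGraph.Walk.length_support p
  rw [hed, Sym2.eq_iff] at hde
  have hinj : ∀ a b (ha : a < p.support.length) (hb : b < p.support.length),
      p.support[a] = p.support[b] → a = b := fun a b ha hb hab =>
    (List.Nodup.getElem_inj_iff hp).mp hab
  rcases hde with ⟨h1, h2⟩ | ⟨h1, h2⟩
  · left
    have := hinj k i (by omega) hi h1
    have := hinj (k+1) j (by omega) hj h2
    omega
  · right
    have := hinj k j (by omega) hj h1
    have := hinj (k+1) i (by omega) hi h2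
    omega

lemma darts_map_prod (g : V → V → ℝ) (p : G.Walk x y) :
    (p.darts.map fun d => g d.toProd.1 d.toProd.2).prod
      = ∏ i : Fin p.length,
          g (p.support[(i:ℕ)]'(by rw [SimpleGraph.Walk.length_support]; omega))
            (p.support[(i:ℕ)+1]'(by rw [SimpleGraph.Walk.length_support]; omega)) := by
  rw [← List.ofFn_get (p.darts.map fun d => g d.toProd.1 d.toProd.2), List.prod_ofFn]
  have hlen : (p.darts.map fun d => g d.toProd.1 d.toProd.2).length = p.length := by
    rw [List.length_map, SimpleGraph.Walk.length_darts]
  refine Fintype.prod_equiv (finCongr hlen) _ _ fun i => ?_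
  simp only [List.get_eq_getElem, List.getElem_map, finCongr_apply, Fin.coe_cast]
  rw [darts_getElem_fst p i.1 (hlen ▸ i.2), darts_getElem_snd p i.1 (hlen ▸ i.2)]

end WalkLemmas

/-- the covariance weight of a chordless path is
`ω(π,Σ) = σ_{xy·P̄} × IF_P`. -/
theorem chordless_path_weight {V : Type*} [Fintype V] [DecidableEq V]
    (S : Matrix V V ℝ) (hS : S.PosDef) (G : SimpleGraph V) [DecidableRel G.Adj]
    (hadapt : Adapted S⁻¹ G) {x y : V} (hxy : x ≠ y) (p : G.Walk x y) (hp : p.IsPath)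
    (hchordless : Chordless p) :
    pathWeight S p =
      pcov S p.support.toFinset
          ⟨x, List.mem_toFinset.mpr p.start_mem_support⟩
          ⟨y, List.mem_toFinset.mpr p.end_mem_support⟩ *
        inflF S p.support.toFinset p.support.toFinsetᶜ := by
  classical
  set P := p.support.toFinset with hP
  set x' : ↥P := ⟨x, List.mem_toFinset.mpr p.start_mem_support⟩ with hx'
  set y' : ↥P := ⟨y, List.mem_toFinset.mpr p.end_mem_support⟩ with hy'
  obtain ⟨hscp, hdetp⟩ := schur_package hS P
  obtain ⟨-, hdetc⟩ := schur_package hS Pᶜ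
  have hnodup : p.support.Nodup := hp.support_nodup
  have hl : p.support.length = p.length + 1 := SimpleGraph.Walk.length_support p
  set n := p.length with hn
  have hcard : P.card = n + 1 := by
    rw [hP, List.toFinset_card_of_nodup hnodup, hl]
  have hSne : S.det ≠ 0 := hS.det_pos.ne'
  have hKdet : S⁻¹.det = S.det⁻¹ := by
    rw [Matrix.det_nonsing_inv, Ring.inverse_eq_inv']
  have hKpd : (S⁻¹).PosDef := hS.inv
  have hApd : (subm S⁻¹ P P).PosDef := subm_posDef hKpd P
  have hAne : (subm S⁻¹ P P).det ≠ 0 := hApd.det_pos.ne'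
  -- det of complement block
  have hdetc' : (subm S⁻¹ Pᶜ Pᶜ).det = (subm S P P).det / S.det := by
    rw [hdetc, subm_det_congr S (compl_compl P)]
  -- pcov = inverse of the K-submatrix
  have hdetpc : (pcovOn S P Pᶜ).det ≠ 0 := by
    intro h0
    apply hAne
    rw [hscp, Matrix.det_nonsing_inv, Ring.inverse_eq_inv', h0, _root_.inv_zero]
  have hpcme : pcov S P = (subm S⁻¹ P P)⁻¹ := by
    show pcovOn S P Pᶜ = _
    rw [hscp, Matrix.nonsing_inv_nonsing_inv _ (isUnit_iff_ne_zero.2 hdetpc)]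
  -- inflation factor
  have hinfl : inflF S P Pᶜ = (subm S P P).det * (subm S⁻¹ P P).det := by
    rw [inflF, subm_det_congr S (Finset.union_compl P), subm_univ_det, hdetp]
    have hSPP : (subm S Pᶜ Pᶜ).det = (subm S⁻¹ P P).det * S.det := by
      rw [hdetp]
      field_simp
    rw [hSPP]
    field_simp
  -- the equiv between Fin (n+1) and P
  set f : Fin (n+1) ≃ ↥P :=
    (finCongr hl.symm).trans ((hnodup.getEquiv p.support).trans
      (Equiv.subtypeEquivRight (fun v => (List.mem_toFinset (a := v)).symm))) with hfdef
  have hf : ∀ i : Fin (n+1), (f i : V) = p.support[(i:ℕ)]'(by omega) := fun i => rfl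
  have hsupp0 : p.support[0]'(by omega) = x := by
    have := p.support_eq_cons
    rw [List.getElem_of_eq this (by omega)]
    rfl
  have hsuppn : p.support[n]'(by omega) = y := by
    have hgl := SimpleGraph.Walk.getLast_support p
    rw [List.getLast_eq_getElem] at hgl
    simp only [show p.support.length - 1 = n from by omega] at hgl
    exact hgl
  have hfx : f 0 = x' := by
    apply Subtype.ext
    rw [hf 0, hx']
    exact hsupp0
  have hfy : f (Fin.last n) = y' := by
    apply Subtype.ext
    rw [hf (Fin.last n), hy']
    exact hsuppn
  -- adjugate evaluation
  have hadjval : (subm S⁻¹ P P).adjugate x' y'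
      = (-1:ℝ)^n * ∏ i : Fin n,
          S⁻¹ (p.support[(i:ℕ)]'(by omega)) (p.support[(i:ℕ)+1]'(by omega)) := by
    rw [Matrix.adjugate_apply,
      ← Matrix.det_submatrix_equiv_self f ((subm S⁻¹ P P).updateRow y' (Pi.single x' 1)),
      Matrix.submatrix_updateRow_equiv]
    have h1 : f.symm y' = Fin.last n := by
      rw [Equiv.symm_apply_eq, hfy]
    have h2 : (fun j => (Pi.single x' 1 : ↥P → ℝ) (f j)) = Pi.single (0 : Fin (n+1)) 1 := by
      funext j
      by_cases hj : j = (0 : Fin (n+1))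
      · subst hj
        rw [hfx]
        simp
      · have hne1 : f j ≠ x' := by
          rw [← hfx]
          exact fun h => hj (f.injective h)
        simp [Pi.single_apply, hne1, hj]
    rw [h1, h2, det_updateRow_tridiag]
    · congr 1
    · intro i j hij
      show S⁻¹ (f i : V) (f j : V) = 0
      by_contra h0
      have hne : (f i : V) ≠ (f j : V) := by
        intro h
        have : i = j := f.injective (Subtype.ext h)
        omega
      have hadj := hadapt _ _ hne h0
      have hmem1 : (f i : V) ∈ p.support := by
        rw [hf i]
        exact List.getElem_mem _
      have hmem2 : (f j : V) ∈ p.support := by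
        rw [hf j]
        exact List.getElem_mem _
      have hedge := hchordless _ _ hmem1 hmem2 hadj
      rw [hf i, hf j] at hedge
      rcases walk_edges_pos p hnodup (by omega) (by omega) hedge with h | h <;> omega
  -- dart product
  have hdprod : (p.darts.map fun d => S⁻¹ d.toProd.1 d.toProd.2).prod
      = ∏ i : Fin n,
          S⁻¹ (p.support[(i:ℕ)]'(by omega)) (p.support[(i:ℕ)+1]'(by omega)) := by
    rw [darts_map_prod (fun u v => S⁻¹ u v) p]
  -- put everything together
  have hadj2 : (subm S⁻¹ P P)⁻¹ x' y' * (subm S⁻¹ P P).det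
      = (subm S⁻¹ P P).adjugate x' y' := by
    rw [Matrix.inv_def, Ring.inverse_eq_inv']
    simp only [Matrix.smul_apply, smul_eq_mul]
    have haux : ∀ a b : ℝ, a ≠ 0 → a⁻¹ * b * a = b := by
      intro a b ha
      field_simp
    exact haux _ _ hAne
  rw [pathWeight, hpcme, hinfl, hcard, hdprod]
  have hmid : (subm S⁻¹ Pᶜ Pᶜ).det / S⁻¹.det = (subm S P P).det := by
    rw [hdetc', hKdet]
    field_simp
  rw [hmid]
  rw [hadjval] at hadj2
  have hsgn : (-1:ℝ)^(n+1+1) = (-1)^n := by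
    rw [pow_add]
    ring
  rw [hsgn]
  linear_combination (-(subm S P P).det) * hadj2
end
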